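/- Let s ∈ (0,1), q ≥ 1, a < b with a, b ≥ 0, and f : ℝ → ℝ twice continuously differentiable on an interval containing [a,b] such that |f''|^q is s-convex in the second sense on [a,b]. Then for p with 1/p + 1/q = 1 (p, q > 1), for all x ∈ [a,b]: |(1/(b−a)) ∫_a^b f(t) dt − f(x) + ((2x−a−b)/2) f'(x)| ≤ (1/(2p+1))^{1/p} · (1/(s+1))^{1/q} · (1/(2(b−a))) · [ (x−a)³ (|f''(x)|^q + |f''(a)|^q)^{1/q} + (b−x)³ (|f''(x)|^q + |f''(b)|^q)^{1/q} ]. -/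

import Mathlib

set_option maxHeartbeats 1000000

open MeasureTheory Set intervalIntegral

private lemma absrpow_integral {e r : ℝ} (he : 0 ≤ e) (hr : 0 < r) :
    ∫ u in (0:ℝ)..e, |u| ^ r = e ^ (r + 1) / (r + 1) := by
  have h1 : ∫ u in (0:ℝ)..e, |u| ^ r = ∫ u in (0:ℝ)..e, u ^ r :=
    intervalIntegral.integral_congr (fun u hu => by
      rw [Set.uIcc_of_le he] at hu
      rw [abs_of_nonneg hu.1])
  rw [h1, integral_rpow (Or.inl (by linarith))]
  rw [Real.zero_rpow (by positivity), sub_zero]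

private lemma piece_bound (g : ℝ → ℝ) (c d γ : ℝ) (hcd : c ≤ d) (p q : ℝ)
    (hpq : Real.HolderConjugate p q) (hg : ContinuousOn g (Set.Icc c d))
    (hK : ∫ t in c..d, |t - γ| ^ (2*p) = (d - c) ^ (2*p+1) / (2*p+1))
    (M : ℝ) (hM : 0 ≤ M) (hgq : ∫ t in c..d, |g t| ^ q ≤ (d - c) * M) :
    ∫ t in c..d, (t - γ)^2 * |g t| ≤ (d - c)^3 * (1/(2*p+1)) ^ (1/p) * M ^ (1/q) := by
  rcases hcd.eq_or_lt with rfl | hlt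
  · simp
  have hdc : 0 < d - c := sub_pos.2 hlt
  have h2p : (0:ℝ) < 2*p+1 := by nlinarith [hpq.lt]
  set μ := volume.restrict (Set.Ioc c d) with hμ
  haveI : IsFiniteMeasure μ := ⟨by
    rw [hμ, Measure.restrict_apply_univ, Real.volume_Ioc]
    exact ENNReal.ofReal_lt_top⟩
  have hFc : Continuous (fun t : ℝ => (t - γ)^2) := by continuity
  have hFm : MemLp (fun t : ℝ => (t - γ)^2) (ENNReal.ofReal p) μ := by
    apply MemLp.of_bound hFc.aestronglyMeasurable ((|c| + |d| + |γ|)^2)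
    filter_upwards [ae_restrict_mem measurableSet_Ioc] with t ht
    have h2 : |t| ≤ |c| + |d| := by
      rw [abs_le]
      constructor
      · nlinarith [neg_abs_le c, abs_nonneg d, ht.1]
      · nlinarith [le_abs_self d, abs_nonneg c, ht.2]
    have h1 : |t - γ| ≤ |c| + |d| + |γ| := (abs_sub _ _).trans (by linarith)
    calc ‖(t - γ)^2‖ = |t - γ|^2 := by rw [Real.norm_eq_abs, abs_pow]
    _ ≤ (|c| + |d| + |γ|)^2 := pow_le_pow_left₀ (abs_nonneg _) h1 2
  obtain ⟨C, hC⟩ := (isCompact_Icc : IsCompact (Set.Icc c d)).exists_bound_of_continuousOn hg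
  have hGm : MemLp (fun t => |g t|) (ENNReal.ofReal q) μ := by
    refine MemLp.of_bound
      (((hg.mono Set.Ioc_subset_Icc_self).abs).aestronglyMeasurable measurableSet_Ioc) C ?_
    filter_upwards [ae_restrict_mem measurableSet_Ioc] with t ht
    rw [Real.norm_eq_abs, abs_abs]
    calc |g t| = ‖g t‖ := (Real.norm_eq_abs _).symm
    _ ≤ C := hC t (Set.Ioc_subset_Icc_self ht)
  have hold := MeasureTheory.integral_mul_le_Lp_mul_Lq_of_nonneg (μ := μ) hpq
      (f := fun t => (t - γ)^2) (g := fun t => |g t|)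
      (Filter.Eventually.of_forall fun t => sq_nonneg _)
      (Filter.Eventually.of_forall fun t => abs_nonneg _) hFm hGm
  have hF : ∫ t, ((t - γ)^2) ^ p ∂μ = (d - c) ^ (2*p+1) / (2*p+1) := by
    rw [← hK, intervalIntegral.integral_of_le hcd]
    refine integral_congr_ae (Filter.Eventually.of_forall fun t => ?_)
    show ((t - γ)^2) ^ p = |t - γ| ^ (2*p)
    rw [← sq_abs, ← Real.rpow_natCast |t - γ| 2, ← Real.rpow_mul (abs_nonneg _)]
    norm_num
  have hGnn : 0 ≤ ∫ t, (|g t|) ^ q ∂μ :=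
    integral_nonneg fun t => Real.rpow_nonneg (abs_nonneg _) q
  have hG : (∫ t, (|g t|) ^ q ∂μ) ^ (1/q) ≤ ((d - c) * M) ^ (1/q) := by
    refine Real.rpow_le_rpow hGnn ?_ (one_div_nonneg.mpr (by linarith [hpq.symm.lt]))
    rw [← intervalIntegral.integral_of_le hcd]
    exact hgq
  have heq : ((d - c) ^ (2*p+1) / (2*p+1)) ^ (1/p) * ((d - c) * M) ^ (1/q)
      = (d - c)^3 * (1/(2*p+1)) ^ (1/p) * M ^ (1/q) := by
    have e1 : ((d - c) ^ (2*p+1) / (2*p+1)) ^ (1/p)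
        = (d - c) ^ ((2*p+1)*(1/p)) / (2*p+1) ^ (1/p) := by
      rw [Real.div_rpow (Real.rpow_nonneg hdc.le _) h2p.le, ← Real.rpow_mul hdc.le]
    have e2 : ((d - c) * M) ^ (1/q) = (d - c) ^ (1/q) * M ^ (1/q) :=
      Real.mul_rpow hdc.le hM
    have e3 : (1/(2*p+1) : ℝ) ^ (1/p) = 1 / (2*p+1) ^ (1/p) := by
      rw [Real.div_rpow zero_le_one h2p.le, Real.one_rpow]
    have e4 : (d - c) ^ ((2*p+1)*(1/p)) * (d - c) ^ (1/q) = (d - c)^3 := by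
      rw [← Real.rpow_add hdc]
      have hp0 : p ≠ 0 := ne_of_gt (by linarith [hpq.lt])
      have hiq : 1/p + 1/q = 1 := by
        simpa [one_div] using hpq.inv_add_inv_eq_one
      have hex : (2*p+1)*(1/p) + 1/q = 3 := by
        have h1 : (2*p+1)*(1/p) = 2 + 1/p := by field_simp
        rw [h1]
        linarith
      rw [hex, show (3:ℝ) = ((3:ℕ):ℝ) by norm_num, Real.rpow_natCast]
    rw [e1, e2, e3, ← e4]
    ring
  calc ∫ t in c..d, (t - γ)^2 * |g t|
      = ∫ t, (t - γ)^2 * |g t| ∂μ := intervalIntegral.integral_of_le hcd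
    _ ≤ (∫ t, ((t - γ)^2) ^ p ∂μ) ^ (1/p) * (∫ t, (|g t|) ^ q ∂μ) ^ (1/q) := hold
    _ ≤ (∫ t, ((t - γ)^2) ^ p ∂μ) ^ (1/p) * ((d - c) * M) ^ (1/q) := by
        apply mul_le_mul_of_nonneg_left hG (Real.rpow_nonneg (by positivity) _)
    _ = ((d - c) ^ (2*p+1) / (2*p+1)) ^ (1/p) * ((d - c) * M) ^ (1/q) := by rw [hF]
    _ = (d - c)^3 * (1/(2*p+1)) ^ (1/p) * M ^ (1/q) := heq

theorem stmt_6 (f : ℝ → ℝ) (a b : ℝ) (s p q : ℝ) (hs : s ∈ Set.Ioo (0:ℝ) 1)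
    (hp : 1 < p) (hq : 1 < q) (hpq : 1/p + 1/q = 1)
    (ha : 0 ≤ a) (hb : 0 ≤ b) (hab : a < b)
    (U : Set ℝ) (hU : IsOpen U) (hsub : Set.Icc a b ⊆ U) (hf : ContDiffOn ℝ 2 f U)
    (hsc : ∀ u ∈ Set.Icc a b, ∀ v ∈ Set.Icc a b, ∀ l ∈ Set.Icc (0:ℝ) 1,
      |deriv (deriv f) (l*u + (1-l)*v)| ^ q ≤
        l ^ s * |deriv (deriv f) u| ^ q + (1-l) ^ s * |deriv (deriv f) v| ^ q) :
    ∀ x ∈ Set.Icc a b,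
      |(1/(b-a)) * (∫ t in a..b, f t) - f x + ((2*x - a - b)/2) * deriv f x|
        ≤ (1/(2*p+1)) ^ (1/p) * (1/(s+1)) ^ (1/q) * (1/(2*(b-a))) *
            ((x-a)^3 * (|deriv (deriv f) x| ^ q + |deriv (deriv f) a| ^ q) ^ (1/q)
             + (b-x)^3 * (|deriv (deriv f) x| ^ q + |deriv (deriv f) b| ^ q) ^ (1/q)) := by
  intro x hx
  have hq0 : (0:ℝ) < q := lt_trans one_pos hq
  have hs0 : 0 < s := hs.1
  have hcj : Real.HolderConjugate p q := Real.holderConjugate_iff.mpr ⟨hp, by simpa [one_div] using hpq⟩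
  have hba : (0:ℝ) < b - a := sub_pos.2 hab
  have hax : a ≤ x := hx.1
  have hxb : x ≤ b := hx.2
  have ha' : a ∈ Set.Icc a b := ⟨le_rfl, hab.le⟩
  have hb' : b ∈ Set.Icc a b := ⟨hab.le, le_rfl⟩
  set g := deriv (deriv f) with hgdef
  -- regularity facts
  have hf1 : ContDiffOn ℝ 1 (deriv f) U := hf.deriv_of_isOpen hU (by norm_num)
  have hgU : ContinuousOn g U := hf1.continuousOn_deriv_of_isOpen hU le_rfl
  have hfc : ContinuousOn f (Set.Icc a b) := (hf.continuousOn).mono hsub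
  have hf'c : ContinuousOn (deriv f) (Set.Icc a b) := hf1.continuousOn.mono hsub
  have hgc : ContinuousOn g (Set.Icc a b) := hgU.mono hsub
  have hfd : ∀ t ∈ Set.Icc a b, HasDerivAt f (deriv f t) t := fun t ht =>
    ((hf.differentiableOn (by norm_num)).differentiableAt (hU.mem_nhds (hsub ht))).hasDerivAt
  have hdd : ∀ t ∈ Set.Icc a b, HasDerivAt (deriv f) (g t) t := fun t ht =>
    ((hf1.differentiableOn (by norm_num)).differentiableAt (hU.mem_nhds (hsub ht))).hasDerivAt
  have hs1 : Set.Icc a x ⊆ Set.Icc a b := Set.Icc_subset_Icc le_rfl hxb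
  have hs2 : Set.Icc x b ⊆ Set.Icc a b := Set.Icc_subset_Icc hax le_rfl
  have hu1 : Set.uIcc a x ⊆ Set.Icc a b := by rw [Set.uIcc_of_le hax]; exact hs1
  have hu2 : Set.uIcc x b ⊆ Set.Icc a b := by rw [Set.uIcc_of_le hxb]; exact hs2
  -- integration by parts
  have hI1 : ∫ t in a..x, (t - a)^2/2 * g t
      = (x - a)^2/2 * deriv f x - ∫ t in a..x, (t - a) * deriv f t := by
    have H := intervalIntegral.integral_mul_deriv_eq_deriv_mul
      (u := fun t => (t - a)^2/2) (u' := fun t => (t - a)) (v := deriv f) (v' := g)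
      (fun t _ => by
        have h := (((hasDerivAt_id t).sub_const a).pow 2).div_const 2
        convert h using 1
        norm_num
        norm_num)
      (fun t ht => hdd t (hu1 ht))
      (((continuous_id.sub continuous_const)).intervalIntegrable _ _)
      ((hgc.mono hu1).intervalIntegrable)
    rw [H]
    norm_num
  have hJ1 : ∫ t in a..x, (t - a) * deriv f t = (x - a) * f x - ∫ t in a..x, f t := by
    have H := intervalIntegral.integral_mul_deriv_eq_deriv_mul
      (u := fun t => t - a) (u' := fun _ => (1:ℝ)) (v := f) (v' := deriv f)
      (fun t _ => (hasDerivAt_id t).sub_const a)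
      (fun t ht => hfd t (hu1 ht))
      (continuous_const.intervalIntegrable _ _)
      ((hf'c.mono hu1).intervalIntegrable)
    rw [H]
    simp
  have hI2 : ∫ t in x..b, (t - b)^2/2 * g t
      = -((x - b)^2/2 * deriv f x) - ∫ t in x..b, (t - b) * deriv f t := by
    have H := intervalIntegral.integral_mul_deriv_eq_deriv_mul
      (u := fun t => (t - b)^2/2) (u' := fun t => (t - b)) (v := deriv f) (v' := g)
      (fun t _ => by
        have h := (((hasDerivAt_id t).sub_const b).pow 2).div_const 2
        convert h using 1
        norm_num
        norm_num)
      (fun t ht => hdd t (hu2 ht))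
      (((continuous_id.sub continuous_const)).intervalIntegrable _ _)
      ((hgc.mono hu2).intervalIntegrable)
    rw [H]
    norm_num
  have hJ2 : ∫ t in x..b, (t - b) * deriv f t = -((x - b) * f x) - ∫ t in x..b, f t := by
    have H := intervalIntegral.integral_mul_deriv_eq_deriv_mul
      (u := fun t => t - b) (u' := fun _ => (1:ℝ)) (v := f) (v' := deriv f)
      (fun t _ => (hasDerivAt_id t).sub_const b)
      (fun t ht => hfd t (hu2 ht))
      (continuous_const.intervalIntegrable _ _)
      ((hf'c.mono hu2).intervalIntegrable)
    rw [H]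
    simp
  have hadd : (∫ t in a..x, f t) + ∫ t in x..b, f t = ∫ t in a..b, f t :=
    intervalIntegral.integral_add_adjacent_intervals
      ((hfc.mono hu1).intervalIntegrable) ((hfc.mono hu2).intervalIntegrable)
  have hE : (1/(b-a)) * (∫ t in a..b, f t) - f x + ((2*x - a - b)/2) * deriv f x
      = ((∫ t in a..x, (t - a)^2/2 * g t) + ∫ t in x..b, (t - b)^2/2 * g t) / (b - a) := by
    rw [hI1, hJ1, hI2, hJ2, ← hadd]
    field_simp
    ring
  -- bounding each piece by the absolute integral
  have habs1 : |∫ t in a..x, (t - a)^2/2 * g t|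
      ≤ (∫ t in a..x, (t - a)^2 * |g t|) / 2 := by
    calc |∫ t in a..x, (t - a)^2/2 * g t| ≤ ∫ t in a..x, |(t - a)^2/2 * g t| :=
          intervalIntegral.abs_integral_le_integral_abs hax
      _ = ∫ t in a..x, (t - a)^2 * |g t| / 2 := by
          refine intervalIntegral.integral_congr fun t _ => ?_
          rw [abs_mul, abs_div, abs_of_nonneg (sq_nonneg _), abs_two]
          ring
      _ = (∫ t in a..x, (t - a)^2 * |g t|) / 2 := intervalIntegral.integral_div 2 _
  have habs2 : |∫ t in x..b, (t - b)^2/2 * g t|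
      ≤ (∫ t in x..b, (t - b)^2 * |g t|) / 2 := by
    calc |∫ t in x..b, (t - b)^2/2 * g t| ≤ ∫ t in x..b, |(t - b)^2/2 * g t| :=
          intervalIntegral.abs_integral_le_integral_abs hxb
      _ = ∫ t in x..b, (t - b)^2 * |g t| / 2 := by
          refine intervalIntegral.integral_congr fun t _ => ?_
          rw [abs_mul, abs_div, abs_of_nonneg (sq_nonneg _), abs_two]
          ring
      _ = (∫ t in x..b, (t - b)^2 * |g t|) / 2 := intervalIntegral.integral_div 2 _
  -- the s-convexity integral bound
  have conv : ∀ w ∈ Set.Icc a b, ∫ l in (0:ℝ)..1, |g ((x - w)*l + w)| ^ q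
      ≤ (|g x| ^ q + |g w| ^ q) / (s+1) := by
    intro w hw
    have hmem : ∀ l ∈ Set.Icc (0:ℝ) 1, (x - w)*l + w ∈ Set.Icc a b := by
      intro l hl
      have h := (convex_Icc a b) hx hw hl.1 (by linarith [hl.2] : (0:ℝ) ≤ 1 - l)
        (by ring : l + (1-l) = 1)
      have e : (x - w)*l + w = l*x + (1-l)*w := by ring
      rw [e]
      simpa [smul_eq_mul] using h
    have hrs : Continuous (fun l : ℝ => l ^ s) :=
      continuous_iff_continuousAt.2 fun y => Real.continuousAt_rpow_const y s (Or.inr hs0.le)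
    have hcont1 : ContinuousOn (fun l => |g ((x - w)*l + w)| ^ q) (Set.uIcc (0:ℝ) 1) := by
      rw [Set.uIcc_of_le zero_le_one]
      have haff : ContinuousOn (fun l : ℝ => (x - w)*l + w) (Set.Icc 0 1) :=
        ((continuous_const.mul continuous_id).add continuous_const).continuousOn
      have hcomp : ContinuousOn (fun l => g ((x - w)*l + w)) (Set.Icc 0 1) :=
        hgc.comp haff (fun l hl => hmem l hl)
      exact (hcomp.abs).rpow_const (fun l _ => Or.inr hq0.le)
    have hint1 : IntervalIntegrable (fun l => |g ((x - w)*l + w)| ^ q) volume 0 1 :=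
      hcont1.intervalIntegrable
    have hint2a : Continuous (fun l : ℝ => l^s * |g x|^q) := hrs.mul continuous_const
    have hint2b : Continuous (fun l : ℝ => (1-l)^s * |g w|^q) :=
      (hrs.comp (continuous_const.sub continuous_id)).mul continuous_const
    have hmono : ∫ l in (0:ℝ)..1, |g ((x - w)*l + w)| ^ q
        ≤ ∫ l in (0:ℝ)..1, (l^s * |g x|^q + (1-l)^s * |g w|^q) := by
      apply intervalIntegral.integral_mono_on zero_le_one hint1
        ((hint2a.add hint2b).intervalIntegrable _ _)
      intro l hl
      have e : (x - w)*l + w = l*x + (1-l)*w := by ring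
      rw [e]
      exact hsc x hx w hw l hl
    have hr1 : ∫ l in (0:ℝ)..1, l ^ s = 1/(s+1) := by
      rw [integral_rpow (Or.inl (by linarith)), Real.one_rpow,
        Real.zero_rpow (by positivity), sub_zero]
    have hr2 : ∫ l in (0:ℝ)..1, (1-l) ^ s = 1/(s+1) := by
      have h := intervalIntegral.integral_comp_sub_left (a := (0:ℝ)) (b := 1)
        (fun u => u ^ s) 1
      norm_num at h
      rw [h, hr1]
    have hval : ∫ l in (0:ℝ)..1, (l^s * |g x|^q + (1-l)^s * |g w|^q)
        = (|g x|^q + |g w|^q) / (s+1) := by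
      rw [intervalIntegral.integral_add (hint2a.intervalIntegrable _ _)
          (hint2b.intervalIntegrable _ _),
        intervalIntegral.integral_mul_const, intervalIntegral.integral_mul_const, hr1, hr2]
      ring
    linarith [hmono, hval.le]
  -- substitution to the unit interval
  have hsub1 : ∫ t in a..x, |g t| ^ q
      = (x - a) * ∫ l in (0:ℝ)..1, |g ((x - a)*l + a)| ^ q := by
    have h := intervalIntegral.smul_integral_comp_mul_add (a := (0:ℝ)) (b := 1)
      (fun t => |g t| ^ q) (x - a) a
    rw [smul_eq_mul, show (x-a)*0 + a = a by ring, show (x-a)*1 + a = x by ring] at h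
    exact h.symm
  have hsub2 : ∫ t in x..b, |g t| ^ q
      = (b - x) * ∫ l in (0:ℝ)..1, |g ((x - b)*l + b)| ^ q := by
    have h := intervalIntegral.smul_integral_comp_mul_add (a := (0:ℝ)) (b := 1)
      (fun t => |g t| ^ q) (x - b) b
    rw [smul_eq_mul, show (x-b)*0 + b = b by ring, show (x-b)*1 + b = x by ring] at h
    rw [intervalIntegral.integral_symm b x, ← h]
    ring
  have hgq1 : ∫ t in a..x, |g t| ^ q ≤ (x - a) * ((|g x|^q + |g a|^q) / (s+1)) := by
    rw [hsub1]
    exact mul_le_mul_of_nonneg_left (conv a ha') (by linarith)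
  have hgq2 : ∫ t in x..b, |g t| ^ q ≤ (b - x) * ((|g x|^q + |g b|^q) / (s+1)) := by
    rw [hsub2]
    exact mul_le_mul_of_nonneg_left (conv b hb') (by linarith)
  -- the kernel power integrals
  have hK1 : ∫ t in a..x, |t - a| ^ (2*p) = (x - a) ^ (2*p+1) / (2*p+1) := by
    have h := intervalIntegral.integral_comp_sub_right (a := a) (b := x)
      (fun u => |u| ^ (2*p)) a
    rw [sub_self] at h
    exact h.trans (absrpow_integral (by linarith) (by linarith))
  have hK2 : ∫ t in x..b, |t - b| ^ (2*p) = (b - x) ^ (2*p+1) / (2*p+1) := by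
    have e : ∫ t in x..b, |t - b| ^ (2*p) = ∫ t in x..b, |b - t| ^ (2*p) :=
      intervalIntegral.integral_congr fun t _ => by rw [abs_sub_comm]
    have h := intervalIntegral.integral_comp_sub_left (a := x) (b := b)
      (fun u => |u| ^ (2*p)) b
    rw [sub_self] at h
    rw [e]
    exact h.trans (absrpow_integral (by linarith) (by linarith))
  -- apply the Hölder piece bound
  have hM1 : (0:ℝ) ≤ (|g x|^q + |g a|^q) / (s+1) := by positivity
  have hM2 : (0:ℝ) ≤ (|g x|^q + |g b|^q) / (s+1) := by positivity
  have hP1 := piece_bound g a x a hax p q hcj (hgc.mono hs1) hK1 _ hM1 hgq1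
  have hP2 := piece_bound g x b b hxb p q hcj (hgc.mono hs2) hK2 _ hM2 hgq2
  have hsplit : ∀ N : ℝ, 0 ≤ N → (N/(s+1)) ^ (1/q) = (1/(s+1)) ^ (1/q) * N ^ (1/q) := by
    intro N hN
    rw [show N/(s+1) = 1/(s+1) * N by ring, Real.mul_rpow (by positivity) hN]
  rw [hsplit _ (by positivity)] at hP1 hP2
  -- final assembly
  rw [hE, abs_div, abs_of_pos hba]
  have hnum : |(∫ t in a..x, (t - a)^2/2 * g t) + ∫ t in x..b, (t - b)^2/2 * g t|
      ≤ ((1/(2*p+1)) ^ (1/p) * (1/(s+1)) ^ (1/q) *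
          ((x-a)^3 * (|g x| ^ q + |g a| ^ q) ^ (1/q)
            + (b-x)^3 * (|g x| ^ q + |g b| ^ q) ^ (1/q))) / 2 := by
    have htri := abs_add_le (∫ t in a..x, (t - a)^2/2 * g t) (∫ t in x..b, (t - b)^2/2 * g t)
    have hr : ((1/(2*p+1)) ^ (1/p) * (1/(s+1)) ^ (1/q) *
          ((x-a)^3 * (|g x| ^ q + |g a| ^ q) ^ (1/q)
            + (b-x)^3 * (|g x| ^ q + |g b| ^ q) ^ (1/q))) / 2
        = ((x-a)^3 * (1/(2*p+1)) ^ (1/p) *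
            ((1/(s+1)) ^ (1/q) * (|g x| ^ q + |g a| ^ q) ^ (1/q))) / 2
          + ((b-x)^3 * (1/(2*p+1)) ^ (1/p) *
            ((1/(s+1)) ^ (1/q) * (|g x| ^ q + |g b| ^ q) ^ (1/q))) / 2 := by
      ring
    rw [hr]
    linarith [htri, habs1, habs2, hP1, hP2]
  calc |(∫ t in a..x, (t - a)^2/2 * g t) + ∫ t in x..b, (t - b)^2/2 * g t| / (b - a)
      ≤ (((1/(2*p+1)) ^ (1/p) * (1/(s+1)) ^ (1/q) *
          ((x-a)^3 * (|g x| ^ q + |g a| ^ q) ^ (1/q)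
            + (b-x)^3 * (|g x| ^ q + |g b| ^ q) ^ (1/q))) / 2) / (b - a) :=
        (div_le_div_iff_of_pos_right hba).mpr hnum
    _ = (1/(2*p+1)) ^ (1/p) * (1/(s+1)) ^ (1/q) * (1/(2*(b-a))) *
          ((x-a)^3 * (|g x| ^ q + |g a| ^ q) ^ (1/q)
            + (b-x)^3 * (|g x| ^ q + |g b| ^ q) ^ (1/q)) := by
        field_simp
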